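/- Let μ_n, for n ∈ ℕ, be random probability measures on ℝ^d × ℝ^{d'}. Denote by μ_n^1 the pushforward of μ_n under the first-coordinate projection and by μ_n^2 the pushforward under the second-coordinate projection. Assume that μ_n^1 converges weakly in probability to a random probability measure μ_∞^1 on ℝ^d, and that μ_n^2 converges weakly in probability to the (deterministic) Dirac measure δ_x for some x ∈ ℝ^{d'}. Then μ_n converges weakly in probability to the product measure μ_∞^1 ⊗ δ_x. -/

import Mathlib

open MeasureTheory Filter Topology

/-- A sequence `μ` of random probability measures on `E` converges weakly in probability to a
random probability measure `ν` if for every subsequence there is a further subsequence along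
which, almost surely, the measures converge weakly (i.e. in the topology of weak convergence
on `ProbabilityMeasure E`). -/
def TendstoWeaklyInProbability {Ω : Type*} [MeasurableSpace Ω] (P : Measure Ω)
    {E : Type*} [MeasurableSpace E] [TopologicalSpace E] [OpensMeasurableSpace E]
    (μ : ℕ → Ω → ProbabilityMeasure E) (ν : Ω → ProbabilityMeasure E) : Prop :=
  ∀ φ : ℕ → ℕ, StrictMono φ →
    ∃ ψ : ℕ → ℕ, StrictMono ψ ∧
      ∀ᵐ ω ∂P, Tendsto (fun i => μ (φ (ψ i)) ω) atTop (𝓝 (ν ω))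

open scoped ENNReal NNReal

/-- Deterministic version: if the first marginals converge weakly to `ν` and the second
marginals converge weakly to the Dirac mass `δ_x`, then the joint measures converge weakly to
`ν ⊗ δ_x`. -/
lemma aux_det_tendsto_prod_dirac {X Y : Type*}
    [MeasurableSpace X] [PseudoMetricSpace X] [OpensMeasurableSpace X] [SecondCountableTopology X]
    [MeasurableSpace Y] [MetricSpace Y] [OpensMeasurableSpace Y] [SecondCountableTopology Y]
    [ProperSpace Y]
    (μs : ℕ → ProbabilityMeasure (X × Y)) (ν : ProbabilityMeasure X) (x : Y)
    (h1 : Tendsto (fun i => (μs i).map (f := Prod.fst) measurable_fst.aemeasurable) atTop (𝓝 ν))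
    (h2 : Tendsto (fun i => (μs i).map (f := Prod.snd) measurable_snd.aemeasurable) atTop
      (𝓝 ⟨Measure.dirac x, inferInstance⟩)) :
    Tendsto μs atTop
      (𝓝 ⟨(ν : Measure X).prod (Measure.dirac x), inferInstance⟩) := by
  apply MeasureTheory.tendsto_of_forall_isOpen_le_liminf
  intro G hG
  -- reduce to an inequality of `ℝ≥0∞`-valued measures
  have aux : ((atTop.liminf fun i => μs i G : ℝ≥0) : ℝ≥0∞)
      = atTop.liminf fun i => ((μs i G : ℝ≥0) : ℝ≥0∞) := by
    refine Monotone.map_liminf_of_continuousAt (F := atTop) ENNReal.coe_mono (fun i => μs i G)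
      ENNReal.continuous_coe.continuousAt ?_ ?_
    · exact IsBoundedUnder.isCoboundedUnder_ge ⟨1, by simp⟩
    · exact ⟨0, by simp⟩
  rw [← ENNReal.coe_le_coe, aux]
  simp only [MeasureTheory.ProbabilityMeasure.ennreal_coeFn_eq_coeFn_toMeasure]
  refine (MeasureTheory.ProbabilityMeasure.ennreal_coeFn_eq_coeFn_toMeasure
    (show ProbabilityMeasure (X × Y) from
      ⟨(ν : Measure X).prod (Measure.dirac x), inferInstance⟩) G).trans_le ?_
  show ((ν : Measure X).prod (Measure.dirac x)) G
      ≤ atTop.liminf fun i => (μs i : Measure (X × Y)) G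
  -- the approximating open sets
  set S : ℝ → Set X := fun δ => {a | ∀ b : Y, dist b x ≤ δ → (a, b) ∈ G} with hS
  have hSopen : ∀ δ : ℝ, IsOpen (S δ) := by
    intro δ
    rw [isOpen_iff_forall_mem_open]
    intro a ha
    have hsub' : ({a} : Set X) ×ˢ Metric.closedBall x δ ⊆ G := by
      rintro ⟨p, q⟩ ⟨hp, hq⟩
      rcases Set.mem_singleton_iff.mp hp with rfl
      exact ha q (Metric.mem_closedBall.mp hq)
    obtain ⟨u, v, hu, hv, hau, hbv, huv⟩ := generalized_tube_lemma isCompact_singleton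
      (isCompact_closedBall x δ) hG hsub'
    exact ⟨u, fun a' ha' b hb => huv (Set.mk_mem_prod ha' (hbv hb)), hu, hau rfl⟩
  have hSmono : ∀ δ' δ : ℝ, δ' ≤ δ → S δ ⊆ S δ' :=
    fun δ' δ h a ha b hb => ha b (hb.trans h)
  -- key estimate for a fixed δ
  have key : ∀ δ : ℝ, 0 < δ →
      (ν : Measure X) (S δ) ≤ atTop.liminf fun i => (μs i : Measure (X × Y)) G := by
    intro δ hδ
    have h1' : (ν : Measure X) (S δ) ≤ atTop.liminf fun i =>
        ((μs i : Measure (X × Y)).map Prod.fst) (S δ) := by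
      have := MeasureTheory.ProbabilityMeasure.le_liminf_measure_open_of_tendsto h1 (hSopen δ)
      simpa only [MeasureTheory.ProbabilityMeasure.toMeasure_map] using this
    have hd : (Measure.dirac x) ((Metric.ball x δ)ᶜ) = 0 := by
      have hx : x ∉ (Metric.ball x δ)ᶜ := fun h => h (Metric.mem_ball_self hδ)
      rw [Measure.dirac_apply' _ Metric.isOpen_ball.measurableSet.compl,
        Set.indicator_of_notMem hx]
    have h2' : atTop.limsup
        (fun i => ((μs i : Measure (X × Y)).map Prod.snd) ((Metric.ball x δ)ᶜ)) ≤ 0 := by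
      have := MeasureTheory.ProbabilityMeasure.limsup_measure_closed_le_of_tendsto
        (F := (Metric.ball x δ)ᶜ) h2 Metric.isOpen_ball.isClosed_compl
      simp only [MeasureTheory.ProbabilityMeasure.toMeasure_map] at this
      exact this.trans (le_of_eq hd)
    have hpt : ∀ i, ((μs i : Measure (X × Y)).map Prod.fst) (S δ) ≤
        (μs i : Measure (X × Y)) G
          + ((μs i : Measure (X × Y)).map Prod.snd) ((Metric.ball x δ)ᶜ) := by
      intro i
      rw [Measure.map_apply measurable_fst (hSopen δ).measurableSet,
        Measure.map_apply measurable_snd Metric.isOpen_ball.measurableSet.compl]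
      refine le_trans (measure_mono ?_) (measure_union_le _ _)
      rintro ⟨a, b⟩ ha
      by_cases hb : b ∈ Metric.ball x δ
      · exact Or.inl (ha b (le_of_lt (Metric.mem_ball.mp hb)))
      · exact Or.inr hb
    refine h1'.trans ?_
    refine ENNReal.le_of_forall_pos_le_add fun ε hε _ => ?_
    have hε' : (0 : ℝ≥0∞) < ε := by exact_mod_cast hε
    have hev : ∀ᶠ i in atTop,
        ((μs i : Measure (X × Y)).map Prod.snd) ((Metric.ball x δ)ᶜ) < (ε : ℝ≥0∞) :=
      eventually_lt_of_limsup_lt (lt_of_le_of_lt h2' hε')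
    calc atTop.liminf (fun i => ((μs i : Measure (X × Y)).map Prod.fst) (S δ))
        ≤ atTop.liminf (fun i => (μs i : Measure (X × Y)) G + (ε : ℝ≥0∞)) := by
          refine liminf_le_liminf ?_
          filter_upwards [hev] with i hi
          exact (hpt i).trans (add_le_add_right hi.le _)
      _ = atTop.liminf (fun i => (μs i : Measure (X × Y)) G) + (ε : ℝ≥0∞) := by
          refine liminf_add_const atTop _ _ ?_ ?_
          · exact IsBoundedUnder.isCoboundedUnder_ge
              ⟨1, Filter.eventually_map.mpr (Eventually.of_forall fun i => prob_le_one)⟩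
          · exact ⟨0, Filter.eventually_map.mpr (Eventually.of_forall fun i => zero_le)⟩
      _ ≤ atTop.liminf (fun i => (μs i : Measure (X × Y)) G) + (ε : ℝ≥0∞) := le_rfl
  -- put things together
  have hL : ((ν : Measure X).prod (Measure.dirac x)) G = (ν : Measure X) {a | (a, x) ∈ G} := by
    rw [Measure.prod_dirac, Measure.map_apply measurable_prodMk_right hG.measurableSet]
    rfl
  have hsub : {a | (a, x) ∈ G} ⊆ ⋃ n : ℕ, S (1 / (n + 1)) := by
    intro a ha
    obtain ⟨u, hu, v, hv, huv⟩ := mem_nhds_prod_iff.mp (hG.mem_nhds ha)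
    obtain ⟨ε, hε, hball⟩ := Metric.mem_nhds_iff.mp hv
    obtain ⟨n, hn⟩ := exists_nat_one_div_lt hε
    refine Set.mem_iUnion.mpr ⟨n, fun b hb =>
      huv (Set.mk_mem_prod (mem_of_mem_nhds hu) (hball (Metric.mem_ball.mpr ?_)))⟩
    exact lt_of_le_of_lt hb hn
  have hUnion : (ν : Measure X) (⋃ n : ℕ, S (1 / (n + 1)))
      = ⨆ n : ℕ, (ν : Measure X) (S (1 / (n + 1))) := by
    refine Directed.measure_iUnion fun m n => ⟨max m n, ?_, ?_⟩
    · refine hSmono _ _ (one_div_le_one_div_of_le (by positivity) ?_)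
      exact_mod_cast add_le_add_left (Nat.cast_le.mpr (le_max_left m n)) 1
    · refine hSmono _ _ (one_div_le_one_div_of_le (by positivity) ?_)
      exact_mod_cast add_le_add_left (Nat.cast_le.mpr (le_max_right m n)) 1
  calc ((ν : Measure X).prod (Measure.dirac x)) G
      = (ν : Measure X) {a | (a, x) ∈ G} := hL
    _ ≤ (ν : Measure X) (⋃ n : ℕ, S (1 / (n + 1))) := measure_mono hsub
    _ = ⨆ n : ℕ, (ν : Measure X) (S (1 / (n + 1))) := hUnion
    _ ≤ atTop.liminf fun i => (μs i : Measure (X × Y)) G :=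
        iSup_le fun n => key _ (by positivity)

/-- Generalized Slutsky theorem: if the first marginals of random probability measures `μ_n` on
`ℝ^d × ℝ^{d'}` converge weakly in probability to a random probability measure `ν₁` on `ℝ^d`, and
the second marginals converge weakly in probability to a deterministic Dirac mass `δ_x`, then
`μ_n` converges weakly in probability to `ν₁ ⊗ δ_x`. -/
theorem tendstoWeaklyInProbability_prod_dirac
    {Ω : Type*} [MeasurableSpace Ω] (P : Measure Ω) [IsProbabilityMeasure P] (d d' : ℕ)
    (μ : ℕ → Ω → ProbabilityMeasure (EuclideanSpace ℝ (Fin d) × EuclideanSpace ℝ (Fin d')))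
    (ν₁ : Ω → ProbabilityMeasure (EuclideanSpace ℝ (Fin d)))
    (x : EuclideanSpace ℝ (Fin d'))
    (h₁ : TendstoWeaklyInProbability P
      (fun n ω => (μ n ω).map (f := Prod.fst) measurable_fst.aemeasurable) ν₁)
    (h₂ : TendstoWeaklyInProbability P
      (fun n ω => (μ n ω).map (f := Prod.snd) measurable_snd.aemeasurable)
      (fun _ => ⟨Measure.dirac x, inferInstance⟩)) :
    TendstoWeaklyInProbability P μ
      (fun ω => ⟨(ν₁ ω : Measure (EuclideanSpace ℝ (Fin d))).prod (Measure.dirac x),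
        inferInstance⟩) := by
  intro φ hφ
  obtain ⟨ψ₁, hψ₁, hae₁⟩ := h₁ φ hφ
  obtain ⟨ψ₂, hψ₂, hae₂⟩ := h₂ (φ ∘ ψ₁) (hφ.comp hψ₁)
  refine ⟨ψ₁ ∘ ψ₂, hψ₁.comp hψ₂, ?_⟩
  filter_upwards [hae₁, hae₂] with ω hω₁ hω₂
  exact aux_det_tendsto_prod_dirac _ _ _ (hω₁.comp hψ₂.tendsto_atTop) hω₂
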